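/- The simplex rotation to the hyperplane is an isometry: let L ≥ 2 and c = (√L − 1)/(L − 1), and define T : ℝ^L → ℝ^{L−1} by (T x)_{l−1} = x_l − c x_1 for l = 2,...,L. Then for any x, y ∈ ℝ^L with Σ_{l=1}^L x_l = Σ_{l=1}^L y_l, one has Σ_{l=2}^L ((x_l − c x_1) − (y_l − c y_1))² = Σ_{l=1}^L (x_l − y_l)²; i.e., T preserves Euclidean distances between points of any hyperplane {x : Σ_l x_l = const}. -/

import Mathlib

open BigOperators

/-- The simplex rotation to the hyperplane is an isometry: with
`c = (√L − 1)/(L − 1)` and `T : ℝ^L → ℝ^{L-1}`, `(Tx)_{l-1} = x_l − c x_1` for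
`l = 2,…,L`, for any `x, y` with equal coordinate sums,
`∑_{l=2}^L ((x_l − c x_1) − (y_l − c y_1))² = ∑_{l=1}^L (x_l − y_l)²`. -/
theorem statement9 (L : ℕ) (hL : 2 ≤ L) (x y : Fin L → ℝ)
    (hxy : ∑ l, x l = ∑ l, y l) :
    ∑ l ∈ Finset.univ.erase (⟨0, by omega⟩ : Fin L),
        ((x l - (Real.sqrt L - 1) / ((L : ℝ) - 1) * x ⟨0, by omega⟩)
          - (y l - (Real.sqrt L - 1) / ((L : ℝ) - 1) * y ⟨0, by omega⟩)) ^ 2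
      = ∑ l, (x l - y l) ^ 2 := by
  have hL0 : (0:ℝ) ≤ (L:ℝ) := by positivity
  have hsq : Real.sqrt L * Real.sqrt L = L := Real.mul_self_sqrt hL0
  have hL2 : (2:ℝ) ≤ (L:ℝ) := by exact_mod_cast hL
  have hL1 : (L:ℝ) - 1 ≠ 0 := by linarith
  set z : Fin L := ⟨0, by omega⟩ with hz
  set c : ℝ := (Real.sqrt L - 1) / ((L : ℝ) - 1) with hc
  have hkey : ((L:ℝ) - 1) * c ^ 2 + 2 * c = 1 := by
    rw [hc]; field_simp; nlinarith [hsq]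
  have h0 : ∑ l, (x l - y l) = 0 := by
    rw [Finset.sum_sub_distrib]; linarith
  have hsplit := Finset.add_sum_erase Finset.univ (fun l => x l - y l) (Finset.mem_univ z)
  have hsplit2 := Finset.add_sum_erase Finset.univ (fun l => (x l - y l) ^ 2) (Finset.mem_univ z)
  have hsum : ∑ l ∈ Finset.univ.erase z, (x l - y l) = -(x z - y z) := by
    linarith
  have hsumsq : ∑ l ∈ Finset.univ.erase z, (x l - y l) ^ 2
      = (∑ l, (x l - y l) ^ 2) - (x z - y z) ^ 2 := by
    linarith
  have hcard : ((Finset.univ.erase z).card : ℝ) = (L:ℝ) - 1 := by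
    rw [Finset.card_erase_of_mem (Finset.mem_univ z), Finset.card_univ, Fintype.card_fin]
    rw [Nat.cast_sub (by omega)]; simp
  calc ∑ l ∈ Finset.univ.erase z, ((x l - c * x z) - (y l - c * y z)) ^ 2
      = ∑ l ∈ Finset.univ.erase z,
          ((x l - y l) ^ 2 - (2 * c * (x z - y z)) * (x l - y l)
            + c ^ 2 * (x z - y z) ^ 2) := by
        exact Finset.sum_congr rfl (fun l _ => by ring)
    _ = (∑ l ∈ Finset.univ.erase z, (x l - y l) ^ 2)
          - (2 * c * (x z - y z)) * (∑ l ∈ Finset.univ.erase z, (x l - y l))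
          + ((Finset.univ.erase z).card : ℝ) * (c ^ 2 * (x z - y z) ^ 2) := by
        rw [Finset.sum_add_distrib, Finset.sum_sub_distrib, ← Finset.mul_sum,
          Finset.sum_const, nsmul_eq_mul]
    _ = ∑ l, (x l - y l) ^ 2 := by
        rw [hsum, hsumsq, hcard]; nlinarith [hkey]
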